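/- Let Ω ⊆ ℝ^d be a bounded open set, let d < p < ∞, and let y : Ω → ℝ be continuously differentiable with y ∈ L²(Ω) and ∇y ∈ L^p(Ω). Then there exists a constant C < ∞, depending only on d, p and the Lebesgue measure |Ω|, such that for all δ > 0, ‖y − Q_δ y‖_{L²(Ω_δ)} ≤ C · ‖∇y‖_{L^p(Ω)} · δ^{1 − d/p}. -/

import Mathlib

open MeasureTheory

/-- The averaging operator `Q_δ`. -/
noncomputable def Qavg {d : ℕ} (δ : ℝ) (v : EuclideanSpace ℝ (Fin d) → ℝ)
    (x : EuclideanSpace ℝ (Fin d)) : ℝ :=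
  (volume (Metric.closedBall x (δ / 2))).toReal⁻¹ * ∫ z in Metric.closedBall x (δ / 2), v z

/-- The inner region `Ω_δ = {x ∈ Ω : dist(x, Ωᶜ) > δ/2}`. -/
def OmegaDelta {d : ℕ} (Ω : Set (EuclideanSpace ℝ (Fin d))) (δ : ℝ) :
    Set (EuclideanSpace ℝ (Fin d)) :=
  {x ∈ Ω | δ / 2 < Metric.infDist x Ωᶜ}

open Pointwise

section Helpers

variable {d : ℕ}

lemma ftc_bound {Ω : Set (EuclideanSpace ℝ (Fin d))} (hΩ : IsOpen Ω)
    {y : EuclideanSpace ℝ (Fin d) → ℝ} (hy : ContDiffOn ℝ 1 y Ω)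
    {x z : EuclideanSpace ℝ (Fin d)} {r : ℝ}
    (hball : Metric.closedBall x r ⊆ Ω) (hz : z ∈ Metric.closedBall x r) :
    |y z - y x| ≤ r * ∫ t in (0:ℝ)..1, ‖fderiv ℝ y (x + t • (z - x))‖ := by
  have hr : 0 ≤ r := dist_nonneg.trans (Metric.mem_closedBall.1 hz)
  set γ : ℝ → EuclideanSpace ℝ (Fin d) := fun t => x + t • (z - x) with hγ
  have hmem : ∀ t ∈ Set.Icc (0:ℝ) 1, γ t ∈ Metric.closedBall x r := by
    intro t ht
    have : dist (γ t) x = t * dist z x := by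
      simp only [hγ, dist_eq_norm, add_sub_cancel_left, norm_smul, Real.norm_eq_abs,
        abs_of_nonneg ht.1]
    rw [Metric.mem_closedBall, this]
    calc t * dist z x ≤ 1 * r := by
          apply mul_le_mul ht.2 (Metric.mem_closedBall.1 hz) dist_nonneg zero_le_one
      _ = r := one_mul r
  have hcontf : ContinuousOn (fderiv ℝ y) Ω := hy.continuousOn_fderiv_of_isOpen hΩ le_rfl
  have hγcont : Continuous γ := by fun_prop
  have hγΩ : ∀ t ∈ Set.Icc (0:ℝ) 1, γ t ∈ Ω := fun t ht => hball (hmem t ht)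
  have hderiv : ∀ t ∈ Set.uIcc (0:ℝ) 1,
      HasDerivAt (fun s => y (γ s)) ((fderiv ℝ y (γ t)) (z - x)) t := by
    intro t ht
    rw [Set.uIcc_of_le zero_le_one] at ht
    have hdy : DifferentiableAt ℝ y (γ t) :=
      (hy.differentiableOn one_ne_zero).differentiableAt (hΩ.mem_nhds (hγΩ t ht))
    have hγd : HasDerivAt γ (z - x) t := by
      have := ((hasDerivAt_id t).smul_const (z - x)).const_add x
      rw [one_smul] at this
      exact this
    exact hdy.hasFDerivAt.comp_hasDerivAt t hγd
  have hcontd : ContinuousOn (fun t => (fderiv ℝ y (γ t)) (z - x)) (Set.Icc (0:ℝ) 1) := by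
    have h1 : ContinuousOn (fun t => fderiv ℝ y (γ t)) (Set.Icc (0:ℝ) 1) :=
      hcontf.comp hγcont.continuousOn hγΩ
    exact h1.clm_apply continuousOn_const
  have hcontn : ContinuousOn (fun t => ‖fderiv ℝ y (γ t)‖) (Set.Icc (0:ℝ) 1) :=
    ((hcontf.comp hγcont.continuousOn hγΩ)).norm
  have hint : IntervalIntegrable (fun t => (fderiv ℝ y (γ t)) (z - x)) volume 0 1 :=
    hcontd.intervalIntegrable_of_Icc zero_le_one
  have heq : ∫ t in (0:ℝ)..1, (fderiv ℝ y (γ t)) (z - x) = y (γ 1) - y (γ 0) :=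
    intervalIntegral.integral_eq_sub_of_hasDerivAt hderiv hint
  have hγ1 : γ 1 = z := by simp [hγ]
  have hγ0 : γ 0 = x := by simp [hγ]
  rw [hγ1, hγ0] at heq
  rw [← heq]
  calc |∫ t in (0:ℝ)..1, (fderiv ℝ y (γ t)) (z - x)|
      ≤ ∫ t in (0:ℝ)..1, ‖(fderiv ℝ y (γ t)) (z - x)‖ := by
        simpa using intervalIntegral.norm_integral_le_integral_norm
          (f := fun t => (fderiv ℝ y (γ t)) (z - x)) zero_le_one
    _ ≤ ∫ t in (0:ℝ)..1, ‖fderiv ℝ y (γ t)‖ * r := by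
        apply intervalIntegral.integral_mono_on zero_le_one
          (hcontd.norm.intervalIntegrable_of_Icc zero_le_one)
          ((hcontn.mul continuousOn_const).intervalIntegrable_of_Icc zero_le_one)
        intro t ht
        calc ‖(fderiv ℝ y (γ t)) (z - x)‖ ≤ ‖fderiv ℝ y (γ t)‖ * ‖z - x‖ :=
              (fderiv ℝ y (γ t)).le_opNorm (z - x)
          _ ≤ ‖fderiv ℝ y (γ t)‖ * r := by
              apply mul_le_mul_of_nonneg_left _ (norm_nonneg _)
              rwa [← dist_eq_norm, ← Metric.mem_closedBall]
    _ = r * ∫ t in (0:ℝ)..1, ‖fderiv ℝ y (γ t)‖ := by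
        rw [← intervalIntegral.integral_const_mul]
        simp_rw [mul_comm]

lemma preimage_addRight_cball (x : EuclideanSpace ℝ (Fin d)) (s : ℝ) :
    (fun u : EuclideanSpace ℝ (Fin d) => u + x) ⁻¹' Metric.closedBall x s
      = Metric.closedBall 0 s := by
  ext u
  simp [Metric.mem_closedBall, dist_eq_norm]

lemma scale_integral (g : EuclideanSpace ℝ (Fin d) → ℝ) (x : EuclideanSpace ℝ (Fin d))
    {r t : ℝ} (ht : 0 < t) (hr : 0 ≤ r) :
    ∫ z in Metric.closedBall x r, g (x + t • (z - x))
      = (t ^ d)⁻¹ * ∫ w in Metric.closedBall x (t * r), g w := by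
  have T : MeasurePreserving (fun u : EuclideanSpace ℝ (Fin d) => u + x) volume volume :=
    measurePreserving_add_right volume x
  have Temb : MeasurableEmbedding (fun u : EuclideanSpace ℝ (Fin d) => u + x) :=
    (Homeomorph.addRight x).isClosedEmbedding.measurableEmbedding
  have h1 : ∫ z in Metric.closedBall x r, g (x + t • (z - x))
      = ∫ u in Metric.closedBall 0 r, g (x + t • u) := by
    rw [← T.setIntegral_preimage_emb Temb (fun z => g (x + t • (z - x))) (Metric.closedBall x r),
      preimage_addRight_cball]
    simp
  have h2 : ∫ u in Metric.closedBall 0 r, g (x + t • u)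
      = (t ^ d)⁻¹ * ∫ u in t • Metric.closedBall (0:EuclideanSpace ℝ (Fin d)) r, g (x + u) := by
    have := Measure.setIntegral_comp_smul_of_pos volume (fun u => g (x + u))
      (Metric.closedBall (0:EuclideanSpace ℝ (Fin d)) r) ht
    rw [finrank_euclideanSpace_fin, smul_eq_mul] at this
    exact this
  have h3 : t • Metric.closedBall (0:EuclideanSpace ℝ (Fin d)) r
      = Metric.closedBall 0 (t * r) := by
    rw [smul_closedBall _ _ hr]
    simp [abs_of_pos ht]
  have h4 : ∫ u in Metric.closedBall (0:EuclideanSpace ℝ (Fin d)) (t * r), g (x + u)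
      = ∫ w in Metric.closedBall x (t * r), g w := by
    rw [← T.setIntegral_preimage_emb Temb g (Metric.closedBall x (t * r)),
      preimage_addRight_cball]
    simp_rw [add_comm x]
  rw [h1, h2, h3, h4]

lemma holder_bound {Ω s : Set (EuclideanSpace ℝ (Fin d))}
    {y : EuclideanSpace ℝ (Fin d) → ℝ} {p q : ℝ} (hpq : p.HolderConjugate q)
    (hgrad : MemLp (gradient y) (ENNReal.ofReal p) (volume.restrict Ω))
    (hs : MeasurableSet s) (hsub : s ⊆ Ω) (hfin : volume s ≠ ⊤) :
    ∫ w in s, ‖gradient y w‖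
      ≤ (∫ w in Ω, ‖gradient y w‖ ^ p) ^ (1/p) * (volume s).toReal ^ (1/q) := by
  have hrs : volume.restrict s = (volume.restrict Ω).restrict s := by
    rw [Measure.restrict_restrict hs, Set.inter_eq_self_of_subset_left hsub]
  haveI : IsFiniteMeasure (volume.restrict s) :=
    ⟨by rwa [Measure.restrict_apply_univ, lt_top_iff_ne_top]⟩
  have hf : MemLp (fun w => ‖gradient y w‖) (ENNReal.ofReal p) (volume.restrict s) := by
    rw [hrs]; exact (hgrad.restrict s).norm
  have hone : MemLp (fun _ : EuclideanSpace ℝ (Fin d) => (1:ℝ)) (ENNReal.ofReal q)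
      (volume.restrict s) := memLp_const 1
  have H := integral_mul_le_Lp_mul_Lq_of_nonneg hpq
    (ae_of_all _ fun w => norm_nonneg (gradient y w)) (ae_of_all _ fun _ => zero_le_one) hf hone
  simp only [mul_one, Real.one_rpow, integral_const, Measure.real, Measure.restrict_apply_univ,
    smul_eq_mul] at H
  refine H.trans ?_
  apply mul_le_mul_of_nonneg_right _ (Real.rpow_nonneg ENNReal.toReal_nonneg _)
  apply Real.rpow_le_rpow (integral_nonneg fun w => Real.rpow_nonneg (norm_nonneg _) _)
  · have hint : IntegrableOn (fun w => ‖gradient y w‖ ^ p) Ω volume := by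
      have := hgrad.integrable_norm_rpow (by simp [hpq.pos]) ENNReal.ofReal_ne_top
      rwa [ENNReal.toReal_ofReal hpq.pos.le] at this
    exact setIntegral_mono_set hint
      (ae_of_all _ fun w => Real.rpow_nonneg (norm_nonneg _) _)
      (HasSubset.Subset.eventuallyLE hsub)
  · exact one_div_nonneg.mpr hpq.pos.le

lemma pointwise_bound {Ω : Set (EuclideanSpace ℝ (Fin d))} (hΩopen : IsOpen Ω)
    {p : ℝ} (hd : 0 < d) (hdp : (d : ℝ) < p)
    {y : EuclideanSpace ℝ (Fin d) → ℝ} (hy : ContDiffOn ℝ 1 y Ω)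
    (hgrad : MemLp (gradient y) (ENNReal.ofReal p) (volume.restrict Ω))
    {δ : ℝ} (hδ : 0 < δ) {x : EuclideanSpace ℝ (Fin d)} (hx : x ∈ OmegaDelta Ω δ) :
    |y x - Qavg δ y x| ≤
      (volume (Metric.closedBall (0:EuclideanSpace ℝ (Fin d)) 1)).toReal ^ (-(1/p))
        * (1 - (d:ℝ)/p)⁻¹ * (∫ w in Ω, ‖gradient y w‖ ^ p) ^ (1/p)
        * (δ/2) ^ (1 - (d:ℝ)/p) := by
  have hp0 : 0 < p := lt_of_le_of_lt (Nat.cast_nonneg d) hdp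
  have hp1 : 1 < p := lt_of_le_of_lt (by exact_mod_cast hd) hdp
  set q := p.conjExponent with hq_def
  have hpq : p.HolderConjugate q := Real.HolderConjugate.conjExponent hp1
  have hsum : 1/p + 1/q = 1 := by rw [one_div, one_div]; exact hpq.inv_add_inv_eq_one
  have hdsum : (d:ℝ)/p + (d:ℝ)/q = d := by
    have : (d:ℝ)/p + (d:ℝ)/q = d * (1/p + 1/q) := by ring
    rw [this, hsum, mul_one]
  set r := δ / 2 with hr_def
  have hrpos : 0 < r := by positivity
  set B := Metric.closedBall x r with hB_def
  have hball : B ⊆ Ω := by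
    intro z hz
    by_contra hzΩ
    have h1 : Metric.infDist x Ωᶜ ≤ dist x z := Metric.infDist_le_dist_of_mem hzΩ
    have h2 : dist x z ≤ r := by rw [dist_comm]; exact Metric.mem_closedBall.1 hz
    exact absurd hx.2 (not_lt.2 (h1.trans h2))
  set cR := (volume (Metric.closedBall (0:EuclideanSpace ℝ (Fin d)) 1)).toReal with hcR_def
  have hcRpos : 0 < cR := ENNReal.toReal_pos (Metric.measure_closedBall_pos volume 0 one_pos).ne'
    measure_closedBall_lt_top.ne
  set gN : EuclideanSpace ℝ (Fin d) → ℝ := fun w => ‖gradient y w‖ with hgN_def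
  have hgNf : gN = fun w => ‖fderiv ℝ y w‖ := by
    funext w
    exact LinearIsometryEquiv.norm_map (InnerProductSpace.toDual ℝ _).symm (fderiv ℝ y w)
  have hgNcont : ContinuousOn gN Ω := by
    rw [hgNf]
    exact (hy.continuousOn_fderiv_of_isOpen hΩopen le_rfl).norm
  have hgNnonneg : ∀ w, 0 ≤ gN w := fun w => norm_nonneg _
  have volB' : ∀ s : ℝ, 0 ≤ s → (volume (Metric.closedBall x s)).toReal = s ^ d * cR := by
    intro s hs
    rw [Measure.addHaar_closedBall' volume x hs, ENNReal.toReal_mul,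
      ENNReal.toReal_ofReal (pow_nonneg hs _), finrank_euclideanSpace_fin]
  have hvB : (volume B).toReal = r ^ d * cR := volB' r hrpos.le
  have hvBpos : 0 < (volume B).toReal := by
    rw [hvB]; positivity
  have hyint : IntegrableOn y B := (hy.continuousOn.mono hball).integrableOn_compact
    (isCompact_closedBall x r)
  -- step 1: rewrite the deviation
  have key : y x - Qavg δ y x = (volume B).toReal⁻¹ * ∫ z in B, (y x - y z) := by
    have h1 : ∫ z in B, (y x - y z) = (volume B).toReal * y x - ∫ z in B, y z := by
      rw [integral_sub (show Integrable (fun _ => y x) (volume.restrict B) from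
          integrableOn_const (μ := volume) (measure_closedBall_lt_top (μ := volume)).ne enorm_ne_top) hyint,
        setIntegral_const, smul_eq_mul, Measure.real]
    rw [h1, Qavg]
    field_simp
    rw [← hr_def, ← hB_def]
    rw [sub_mul, div_mul_cancel₀ _ hvBpos.ne']
  -- step 2
  have hmap : ∀ z ∈ B, ∀ t ∈ Set.Icc (0:ℝ) 1, x + t • (z - x) ∈ B := by
    intro z hz t ht
    have : dist (x + t • (z - x)) x = t * dist z x := by
      simp only [dist_eq_norm, add_sub_cancel_left, norm_smul, Real.norm_eq_abs,
        abs_of_nonneg ht.1]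
    rw [Metric.mem_closedBall, this]
    calc t * dist z x ≤ 1 * r :=
        mul_le_mul ht.2 (Metric.mem_closedBall.1 hz) dist_nonneg zero_le_one
      _ = r := one_mul r
  set F : EuclideanSpace ℝ (Fin d) × ℝ → ℝ := fun w => gN (x + w.2 • (w.1 - x)) with hF_def
  have hFint : Integrable F ((volume.restrict B).prod (volume.restrict (Set.Ioc 0 1))) := by
    rw [Measure.prod_restrict]
    refine IntegrableOn.mono_set ?_ (Set.prod_mono subset_rfl Set.Ioc_subset_Icc_self)
    apply ContinuousOn.integrableOn_compact (((isCompact_closedBall x r).prod isCompact_Icc))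
    have hφ : Continuous (fun w : EuclideanSpace ℝ (Fin d) × ℝ => x + w.2 • (w.1 - x)) := by
      fun_prop
    exact hgNcont.comp hφ.continuousOn
      (fun w hw => hball (hmap w.1 hw.1 w.2 hw.2))
  have hmarg : Integrable (fun z => ∫ t in Set.Ioc (0:ℝ) 1, F (z, t)) (volume.restrict B) :=
    hFint.integral_prod_left
  have step3 : ∫ z in B, |y x - y z| ≤ ∫ z in B, r * ∫ t in Set.Ioc (0:ℝ) 1, F (z, t) := by
    refine integral_mono_of_nonneg (ae_of_all _ fun z => abs_nonneg _)
      (hmarg.const_mul r) ?_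
    refine (ae_restrict_iff' measurableSet_closedBall).2 (ae_of_all _ fun z hz => ?_)
    dsimp only
    rw [abs_sub_comm]
    calc |y z - y x| ≤ r * ∫ t in (0:ℝ)..1, ‖fderiv ℝ y (x + t • (z - x))‖ :=
        ftc_bound hΩopen hy hball hz
      _ = r * ∫ t in Set.Ioc (0:ℝ) 1, F (z, t) := by
          rw [intervalIntegral.integral_of_le zero_le_one]
          simp only [hF_def, hgNf]
  have step4 : ∫ z in B, r * ∫ t in Set.Ioc (0:ℝ) 1, F (z, t)
      = r * ∫ z in B, ∫ t in Set.Ioc (0:ℝ) 1, F (z, t) := integral_const_mul _ _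
  have step5 : ∫ z in B, ∫ t in Set.Ioc (0:ℝ) 1, F (z, t)
      = ∫ t in Set.Ioc (0:ℝ) 1, ∫ z in B, gN (x + t • (z - x)) :=
    integral_integral_swap hFint
  set Gp := (∫ w in Ω, gN w ^ p) ^ (1/p) with hGp_def
  have hGpnonneg : 0 ≤ Gp :=
    Real.rpow_nonneg (integral_nonneg fun w => Real.rpow_nonneg (hgNnonneg w) _) _
  have step6 : ∀ t ∈ Set.Ioc (0:ℝ) 1, ∫ z in B, gN (x + t • (z - x))
      ≤ Gp * cR ^ (1/q) * r ^ ((d:ℝ)/q) * t ^ (-((d:ℝ)/p)) := by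
    intro t ht
    rw [scale_integral gN x ht.1 hrpos.le]
    have hsub2 : Metric.closedBall x (t * r) ⊆ Ω :=
      (Metric.closedBall_subset_closedBall
        (mul_le_of_le_one_left hrpos.le ht.2)).trans hball
    have hH := holder_bound hpq hgrad measurableSet_closedBall hsub2
      measure_closedBall_lt_top.ne
    have htr : 0 ≤ t * r := mul_nonneg ht.1.le hrpos.le
    rw [volB' (t * r) htr] at hH
    calc (t ^ d)⁻¹ * ∫ w in Metric.closedBall x (t * r), gN w
        ≤ (t ^ d)⁻¹ * (Gp * ((t * r) ^ d * cR) ^ (1/q)) := by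
          exact mul_le_mul_of_nonneg_left hH (inv_nonneg.2 (pow_nonneg ht.1.le _))
      _ = Gp * cR ^ (1/q) * r ^ ((d:ℝ)/q) * t ^ (-((d:ℝ)/p)) := by
          rw [Real.mul_rpow (pow_nonneg htr _) hcRpos.le,
            ← Real.rpow_natCast (t * r) d, ← Real.rpow_mul htr,
            Real.mul_rpow ht.1.le hrpos.le,
            ← Real.rpow_natCast t d, ← Real.rpow_neg ht.1.le]
          rw [show (d:ℝ) * (1/q) = (d:ℝ)/q by ring]
          rw [show t ^ (-(d:ℝ)) * (Gp * (t ^ ((d:ℝ)/q) * r ^ ((d:ℝ)/q) * cR ^ (1/q)))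
              = Gp * cR ^ (1/q) * r ^ ((d:ℝ)/q) * (t ^ (-(d:ℝ)) * t ^ ((d:ℝ)/q)) by ring]
          rw [← Real.rpow_add ht.1,
            show (-(d:ℝ) + (d:ℝ)/q) = -((d:ℝ)/p) by linarith]
  have hintpow : IntegrableOn (fun t : ℝ => t ^ (-((d:ℝ)/p))) (Set.Ioc (0:ℝ) 1) := by
    have hlt : (-1:ℝ) < -((d:ℝ)/p) := by
      have : (d:ℝ)/p < 1 := (div_lt_one hp0).2 hdp
      linarith
    have := intervalIntegral.intervalIntegrable_rpow' (a := 0) (b := 1) hlt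
    rwa [intervalIntegrable_iff_integrableOn_Ioc_of_le zero_le_one] at this
  have step7 : ∫ t in Set.Ioc (0:ℝ) 1, ∫ z in B, gN (x + t • (z - x))
      ≤ ∫ t in Set.Ioc (0:ℝ) 1, Gp * cR ^ (1/q) * r ^ ((d:ℝ)/q) * t ^ (-((d:ℝ)/p)) := by
    refine integral_mono_of_nonneg
      (ae_of_all _ fun t => integral_nonneg fun z => hgNnonneg _)
      ((hintpow.const_mul _)) ?_
    exact (ae_restrict_iff' measurableSet_Ioc).2 (ae_of_all _ step6)
  have hval : ∫ t in Set.Ioc (0:ℝ) 1, t ^ (-((d:ℝ)/p)) = (1 - (d:ℝ)/p)⁻¹ := by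
    rw [← intervalIntegral.integral_of_le zero_le_one]
    have hlt : (-1:ℝ) < -((d:ℝ)/p) := by
      have : (d:ℝ)/p < 1 := (div_lt_one hp0).2 hdp
      linarith
    rw [integral_rpow (Or.inl hlt)]
    have hne : -((d:ℝ)/p) + 1 ≠ 0 := by
      have : (d:ℝ)/p < 1 := (div_lt_one hp0).2 hdp
      intro h; linarith
    rw [Real.one_rpow, Real.zero_rpow hne]
    rw [show -((d:ℝ)/p) + 1 = 1 - (d:ℝ)/p by ring]
    rw [sub_zero, one_div]
  have step8 : ∫ t in Set.Ioc (0:ℝ) 1, Gp * cR ^ (1/q) * r ^ ((d:ℝ)/q) * t ^ (-((d:ℝ)/p))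
      = Gp * cR ^ (1/q) * r ^ ((d:ℝ)/q) * (1 - (d:ℝ)/p)⁻¹ := by
    rw [integral_const_mul, hval]
  -- assemble
  have habs : |y x - Qavg δ y x| ≤ (volume B).toReal⁻¹ * ∫ z in B, |y x - y z| := by
    rw [key, abs_mul, abs_of_nonneg (inv_nonneg.2 ENNReal.toReal_nonneg)]
    apply mul_le_mul_of_nonneg_left _ (inv_nonneg.2 ENNReal.toReal_nonneg)
    simpa [Real.norm_eq_abs] using
      norm_integral_le_integral_norm (μ := volume.restrict B) (fun z => y x - y z)
  have chain : |y x - Qavg δ y x| ≤ (volume B).toReal⁻¹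
      * (r * (Gp * cR ^ (1/q) * r ^ ((d:ℝ)/q) * (1 - (d:ℝ)/p)⁻¹)) := by
    refine habs.trans (mul_le_mul_of_nonneg_left ?_ (inv_nonneg.2 ENNReal.toReal_nonneg))
    calc ∫ z in B, |y x - y z| ≤ ∫ z in B, r * ∫ t in Set.Ioc (0:ℝ) 1, F (z, t) := step3
      _ = r * ∫ t in Set.Ioc (0:ℝ) 1, ∫ z in B, gN (x + t • (z - x)) := by
          rw [step4, step5]
      _ ≤ r * (Gp * cR ^ (1/q) * r ^ ((d:ℝ)/q) * (1 - (d:ℝ)/p)⁻¹) := by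
          apply mul_le_mul_of_nonneg_left _ hrpos.le
          rw [← step8]; exact step7
  refine chain.trans_eq ?_
  rw [hvB]
  have e1 : cR ^ (-(1/p)) = cR⁻¹ * cR ^ (1/q) := by
    rw [← Real.rpow_neg_one cR, ← Real.rpow_add hcRpos]
    congr 1
    linarith
  have e2 : r ^ (1 - (d:ℝ)/p) = ((r:ℝ) ^ (d:ℕ))⁻¹ * r * r ^ ((d:ℝ)/q) := by
    rw [← Real.rpow_natCast r d, ← Real.rpow_neg hrpos.le]
    nth_rewrite 3 [← Real.rpow_one r]
    rw [← Real.rpow_add hrpos, ← Real.rpow_add hrpos]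
    congr 1
    linarith
  have hKnonneg : (0:ℝ) ≤ (1 - (d:ℝ)/p)⁻¹ := by
    have : (d:ℝ)/p < 1 := (div_lt_one hp0).2 hdp
    exact inv_nonneg.2 (by linarith)
  rw [mul_inv, e1, e2]
  ring

end Helpers

/-- `‖y − Q_δ y‖_{L²(Ω_δ)} = O(δ^{1 − d/p})`. -/
theorem average_deviation_decay
    {d : ℕ} (Ω : Set (EuclideanSpace ℝ (Fin d)))
    (hΩopen : IsOpen Ω) (hΩbdd : Bornology.IsBounded Ω)
    (p : ℝ) (hdp : (d : ℝ) < p)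
    (y : EuclideanSpace ℝ (Fin d) → ℝ) (hy : ContDiffOn ℝ 1 y Ω)
    (hyL2 : MemLp y 2 (volume.restrict Ω))
    (hgrad : MemLp (gradient y) (ENNReal.ofReal p) (volume.restrict Ω)) :
    ∃ C : ℝ, ∀ δ : ℝ, 0 < δ →
      (eLpNorm (fun x => y x - Qavg δ y x) 2 (volume.restrict (OmegaDelta Ω δ))).toReal
        ≤ C * (eLpNorm (gradient y) (ENNReal.ofReal p) (volume.restrict Ω)).toReal *
            δ ^ (1 - (d : ℝ) / p) := by
  rcases Nat.eq_zero_or_pos d with hd0 | hdpos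
  · -- degenerate case `d = 0`
    subst hd0
    refine ⟨0, fun δ hδ => ?_⟩
    have huniv : (volume : Measure (EuclideanSpace ℝ (Fin 0))) Set.univ = 1 := by
      have h := (EuclideanSpace.volume_preserving_symm_measurableEquiv_toLp (Fin 0)).measure_preimage
        (MeasurableSet.univ.nullMeasurableSet (μ := volume))
      simpa [volume_pi, Measure.pi_univ] using h
    have hfun : (fun x => y x - Qavg δ y x) = fun _ => (0:ℝ) := by
      funext x
      have hball : Metric.closedBall x (δ/2) = Set.univ := by
        ext z
        simp [Metric.mem_closedBall, Subsingleton.elim z x, (by positivity : (0:ℝ) ≤ δ/2)]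
      have hyc : y = fun _ => y x := funext fun z => by rw [Subsingleton.elim z x]
      rw [Qavg, hball, Measure.restrict_univ]
      rw [show ∫ z, y z = y x by conv_lhs => rw [hyc]; rw [integral_const]; simp [Measure.real, huniv]]
      rw [huniv]
      simp
    rw [hfun]
    simp [eLpNorm_zero]
  · -- main case `0 < d`
    have hd : (0:ℝ) < d := by exact_mod_cast hdpos
    have hp0 : 0 < p := hd.trans hdp
    set α := 1 - (d:ℝ)/p with hα_def
    have hα : 0 < α := by
      have : (d:ℝ)/p < 1 := (div_lt_one hp0).2 hdp
      simp only [hα_def]; linarith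
    set cR := (volume (Metric.closedBall (0:EuclideanSpace ℝ (Fin d)) 1)).toReal with hcR_def
    have hcRpos : 0 < cR := ENNReal.toReal_pos
      (Metric.measure_closedBall_pos volume 0 one_pos).ne' measure_closedBall_lt_top.ne
    set N := (eLpNorm (gradient y) (ENNReal.ofReal p) (volume.restrict Ω)).toReal with hN_def
    have hNnonneg : 0 ≤ N := ENNReal.toReal_nonneg
    have hNG : (∫ w in Ω, ‖gradient y w‖ ^ p) ^ (1/p) = N := by
      rw [hN_def, hgrad.eLpNorm_eq_integral_rpow_norm
        (by simp [hp0, ENNReal.ofReal_eq_zero, not_le]) ENNReal.ofReal_ne_top]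
      rw [ENNReal.toReal_ofReal_eq_iff.2, ENNReal.toReal_ofReal hp0.le, one_div]
      exact Real.rpow_nonneg
        (integral_nonneg fun w => Real.rpow_nonneg (norm_nonneg _) _) _
    set K := (1 - (d:ℝ)/p)⁻¹ with hK_def
    have hKnonneg : (0:ℝ) ≤ K := inv_nonneg.2 hα.le
    have hΩfin : volume Ω < ⊤ := hΩbdd.measure_lt_top
    set V := (volume Ω).toReal ^ ((2:ℝ)⁻¹) with hV_def
    have hVnonneg : 0 ≤ V := Real.rpow_nonneg ENNReal.toReal_nonneg _
    refine ⟨V * (cR ^ (-(1/p)) * K * (2:ℝ) ^ (-α)), fun δ hδ => ?_⟩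
    have hmeas : MeasurableSet (OmegaDelta Ω δ) := by
      have : OmegaDelta Ω δ = Ω ∩ {x | δ/2 < Metric.infDist x Ωᶜ} := by
        ext x; simp [OmegaDelta, Set.mem_sep_iff]
      rw [this]
      exact (hΩopen.inter (isOpen_lt continuous_const
        (Metric.continuous_infDist_pt Ωᶜ))).measurableSet
    set M := cR ^ (-(1/p)) * K * N * (δ/2) ^ α with hM_def
    have hMnonneg : 0 ≤ M := by
      have : (0:ℝ) ≤ cR ^ (-(1/p)) := Real.rpow_nonneg hcRpos.le _
      have h2 : (0:ℝ) ≤ (δ/2) ^ α := Real.rpow_nonneg (by positivity) _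
      positivity
    have hbound : ∀ᵐ x ∂(volume.restrict (OmegaDelta Ω δ)),
        ‖y x - Qavg δ y x‖ ≤ M := by
      refine (ae_restrict_iff' hmeas).2 (ae_of_all _ fun x hx => ?_)
      rw [Real.norm_eq_abs]
      have := pointwise_bound hΩopen hdpos hdp hy hgrad hδ hx
      rwa [hNG] at this
    have hsn : eLpNorm (fun x => y x - Qavg δ y x) 2 (volume.restrict (OmegaDelta Ω δ))
        ≤ (volume.restrict (OmegaDelta Ω δ)) Set.univ ^ (ENNReal.toReal 2)⁻¹
          * ENNReal.ofReal M := eLpNorm_le_of_ae_bound hbound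
    have h2t : (ENNReal.toReal 2)⁻¹ = (2:ℝ)⁻¹ := by norm_num
    rw [h2t] at hsn
    have hrest : (volume.restrict (OmegaDelta Ω δ)) Set.univ = volume (OmegaDelta Ω δ) := by
      rw [Measure.restrict_apply_univ]
    rw [hrest] at hsn
    have hfin1 : volume (OmegaDelta Ω δ) ≤ volume Ω :=
      measure_mono fun x hx => hx.1
    have hRfin : (volume (OmegaDelta Ω δ)) ^ ((2:ℝ)⁻¹) * ENNReal.ofReal M ≠ ⊤ := by
      apply ENNReal.mul_ne_top _ ENNReal.ofReal_ne_top
      exact ENNReal.rpow_ne_top_of_nonneg (by norm_num)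
        (lt_of_le_of_lt hfin1 hΩfin).ne
    have step1 : (eLpNorm (fun x => y x - Qavg δ y x) 2
        (volume.restrict (OmegaDelta Ω δ))).toReal
        ≤ (volume (OmegaDelta Ω δ)).toReal ^ ((2:ℝ)⁻¹) * M := by
      have := ENNReal.toReal_mono hRfin hsn
      rwa [ENNReal.toReal_mul, ← ENNReal.toReal_rpow,
        ENNReal.toReal_ofReal hMnonneg] at this
    have step2 : (volume (OmegaDelta Ω δ)).toReal ^ ((2:ℝ)⁻¹) * M ≤ V * M := by
      apply mul_le_mul_of_nonneg_right _ hMnonneg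
      apply Real.rpow_le_rpow ENNReal.toReal_nonneg _ (by norm_num)
      exact ENNReal.toReal_mono hΩfin.ne hfin1
    refine (step1.trans step2).trans_eq ?_
    have hδ2 : (δ/2) ^ α = δ ^ α * (2:ℝ) ^ (-α) := by
      rw [div_eq_mul_inv, Real.mul_rpow hδ.le (by norm_num),
        Real.inv_rpow (by norm_num), ← Real.rpow_neg (by norm_num)]
    rw [hM_def, hδ2]
    ring
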